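/- Let K = (V, 2^V) be the full (n−1)-dimensional simplex on a vertex set V with n elements, and let 0 ≤ q ≤ n − 2. Then the multiset of eigenvalues of the restriction of D_q^up to C^q(K,ℂ) is symmetric about the origin if and only if n is even and q = n/2 − 1. -/

import Mathlib

open scoped BigOperators Classical

/-- The set of oriented `q`-simplices of the full `(n−1)`-dimensional simplex on the
vertex set `Fin n`: a `(q+1)`-element vertex set together with one of its two
orientations (`true` denoting the orientation given by the increasing ordering of the
vertices). -/
abbrev FullOSimp (n q : ℕ) : Type := {A : Finset (Fin n) // A.card = q + 1} × Bool

/-- The orientation reversal `τ ↦ τ̄`. -/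
def fbar {n q : ℕ} (τ : FullOSimp n q) : FullOSimp n q := (τ.1, !τ.2)

/-- The sign of an orientation. -/
def bsgn (b : Bool) : ℝ := if b then 1 else -1

/-- The position of the vertex removed from `B` to get `A` (for `A ⊆ B` with one
element removed), in the increasing enumeration of `B`. -/
def remIdx {n : ℕ} (B A : Finset (Fin n)) : ℕ :=
  ∑ a ∈ B \ A, (B.filter (fun b => b < a)).card

/-- The incidence sign `sgn(σ,τ)`: for `σ = ⟨a_0 ⋯ a_{q+1}⟩` (increasing) and
`τ = ⟨a_0 ⋯ â_j ⋯ a_{q+1}⟩` it is `(−1)^j`, extended to both orientations by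
`sgn(σ̄,τ) = sgn(σ,τ̄) = −sgn(σ,τ)`, and `0` if `[τ]` is not a face of `[σ]`. -/
noncomputable def fsgn {n q : ℕ} (σ : FullOSimp n (q + 1)) (τ : FullOSimp n q) : ℝ :=
  if τ.1.1 ⊆ σ.1.1 then (-1 : ℝ) ^ (remIdx σ.1.1 τ.1.1) * bsgn σ.2 * bsgn τ.2 else 0

/-- `deg_X(τ)`: the number of `(q+1)`-dimensional simplices containing `[τ]` as a face. -/
noncomputable def fdegX (n q : ℕ) (τ : FullOSimp n q) : ℕ :=
  (Finset.univ.filter (fun B : Finset (Fin n) => B.card = q + 2 ∧ τ.1.1 ⊆ B)).card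

/-- `η^up(τ₁,τ₂) = sgn(σ,τ₁)·sgn(σ,τ₂)` where `σ` is (either orientation of) the unique
`(q+1)`-simplex containing the up neighbors `[τ₁] ≠ [τ₂]`, and `0` otherwise. -/
noncomputable def fetaUp {n q : ℕ} (τ₁ τ₂ : FullOSimp n q) : ℝ :=
  if h : τ₁.1.1 ≠ τ₂.1.1 ∧ (τ₁.1.1 ∪ τ₂.1.1).card = q + 1 + 1 then
    fsgn (⟨⟨τ₁.1.1 ∪ τ₂.1.1, h.2⟩, true⟩ : FullOSimp n (q + 1)) τ₁ *
      fsgn (⟨⟨τ₁.1.1 ∪ τ₂.1.1, h.2⟩, true⟩ : FullOSimp n (q + 1)) τ₂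
  else 0

/-- The normalization constant `(2(q+1) deg_X τ)^{-1/2}`. -/
noncomputable def fc (n q : ℕ) (τ : FullOSimp n q) : ℂ :=
  ((Real.sqrt (2 * (q + 1) * fdegX n q τ) : ℝ) : ℂ)⁻¹

/-- The matrix of `d_{X_q} : ℓ²(E(X_q)) → ℓ²(K_q)`. -/
noncomputable def fdM (n q : ℕ) : Matrix (FullOSimp n q) (FullOSimp n q × FullOSimp n q) ℂ :=
  fun τ p => if p.1 = τ ∧ fetaUp p.1 p.2 ≠ 0 then fc n q τ else 0

/-- The matrix of `d_{X_q}* : ℓ²(K_q) → ℓ²(E(X_q))`. -/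
noncomputable def fdstarM (n q : ℕ) : Matrix (FullOSimp n q × FullOSimp n q) (FullOSimp n q) ℂ :=
  fun p τ => if p.1 = τ ∧ fetaUp p.1 p.2 ≠ 0 then fc n q τ else 0

/-- The matrix of the shift `(S^up g)(τ₁,τ₂) = η^up(τ₁,τ₂) g(τ₂,τ₁)`. -/
noncomputable def fshiftM (n q : ℕ) :
    Matrix (FullOSimp n q × FullOSimp n q) (FullOSimp n q × FullOSimp n q) ℂ :=
  fun p p' => if p'.1 = p.2 ∧ p'.2 = p.1 then (fetaUp p.1 p.2 : ℂ) else 0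

/-- The up discriminant `D_q^up = d_{X_q} S^up d_{X_q}*` of the full simplex. -/
noncomputable def fdiscM (n q : ℕ) : Matrix (FullOSimp n q) (FullOSimp n q) ℂ :=
  fdM n q * fshiftM n q * fdstarM n q

/-- The cochain space `C^q(K,ℂ) = {f : f(τ̄) = −f(τ)}`. -/
noncomputable def fCSub (n q : ℕ) : Submodule ℂ (FullOSimp n q → ℂ) where
  carrier := {f | ∀ τ, f (fbar τ) = - f τ}
  add_mem' := by
    intro a b ha hb τ
    simp only [Pi.add_apply, ha τ, hb τ]; ring
  zero_mem' := by intro τ; simp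
  smul_mem' := by
    intro c f hf τ
    simp only [Pi.smul_apply, hf τ, smul_eq_mul]; ring

/-- The eigenspace of the restriction of `D_q^up` to `C^q(K,ℂ)` at `μ`. -/
noncomputable def fEig (n q : ℕ) (μ : ℂ) : Submodule ℂ (FullOSimp n q → ℂ) :=
  Module.End.eigenspace (Matrix.mulVecLin (fdiscM n q)) μ ⊓ fCSub n q

section CombiAux

variable {n q : ℕ}

lemma count_sup (A : Finset (Fin n)) (hA : A.card = q + 1) :
    (Finset.univ.filter (fun B : Finset (Fin n) => B.card = q + 2 ∧ A ⊆ B)).card = n - (q + 1) := by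
  have himg : Finset.univ.filter (fun B : Finset (Fin n) => B.card = q + 2 ∧ A ⊆ B)
      = (Finset.univ \ A).image (fun y => insert y A) := by
    ext B
    simp only [Finset.mem_filter, Finset.mem_univ, true_and, Finset.mem_image, Finset.mem_sdiff]
    constructor
    · rintro ⟨hc, hs⟩
      have h1 : (B \ A).card = 1 := by
        rw [Finset.card_sdiff_of_subset hs, hc, hA]; omega
      obtain ⟨y, hy⟩ := Finset.card_eq_one.1 h1
      have hyB : y ∈ B \ A := hy ▸ Finset.mem_singleton_self y
      rw [Finset.mem_sdiff] at hyB
      refine ⟨y, hyB.2, ?_⟩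
      refine Finset.eq_of_subset_of_card_le (Finset.insert_subset hyB.1 hs) ?_
      rw [Finset.card_insert_of_notMem hyB.2, hA, hc]
    · rintro ⟨y, hy, rfl⟩
      exact ⟨by rw [Finset.card_insert_of_notMem hy, hA], Finset.subset_insert _ _⟩
  rw [himg, Finset.card_image_of_injOn, Finset.card_sdiff_of_subset (Finset.subset_univ A),
    Finset.card_univ, Fintype.card_fin, hA]
  intro y hy y' hy' h
  simp only [Finset.coe_sdiff, Finset.coe_univ, Set.mem_diff, Finset.mem_coe] at hy hy'
  have h2 : insert y A = insert y' A := h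
  have : y ∈ insert y' A := h2 ▸ Finset.mem_insert_self y A
  rcases Finset.mem_insert.1 this with h' | h'
  · exact h'
  · exact absurd h' hy.2

lemma remIdx_single {U A : Finset (Fin n)} {z : Fin n} (h : U \ A = {z}) :
    remIdx U A = (U.filter (fun b => b < z)).card := by
  rw [remIdx, h, Finset.sum_singleton]

lemma cnt_split {U A : Finset (Fin n)} {z : Fin n} (h : U \ A = {z}) (hA : A ⊆ U)
    {x : Fin n} (hx : x ∈ A) :
    (U.filter (fun b => b < x)).card
      = (A.filter (fun b => b < x)).card + (if z < x then 1 else 0) := by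
  have hz : z ∈ U \ A := by rw [h]; exact Finset.mem_singleton_self z
  rw [Finset.mem_sdiff] at hz
  have hU : U = A ∪ {z} := by
    ext a
    simp only [Finset.mem_union, Finset.mem_singleton]
    constructor
    · intro ha
      by_cases haA : a ∈ A
      · exact Or.inl haA
      · right
        have : a ∈ U \ A := Finset.mem_sdiff.2 ⟨ha, haA⟩
        rw [h] at this; exact Finset.mem_singleton.1 this
    · rintro (ha | rfl)
      · exact hA ha
      · exact hz.1
  rw [hU, Finset.filter_union, Finset.card_union_of_disjoint
    (Finset.disjoint_filter_filter (Finset.disjoint_singleton_right.2 hz.2)),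
    Finset.filter_singleton]
  congr 1
  split <;> simp

lemma neg_one_pow_cnt {U A : Finset (Fin n)} {z : Fin n} (h : U \ A = {z}) (hA : A ⊆ U)
    {x : Fin n} (hx : x ∈ A) :
    ((-1 : ℂ) ^ (U.filter (fun b => b < x)).card)
      = (-1) ^ (A.filter (fun b => b < x)).card * (if z < x then -1 else 1) := by
  rw [cnt_split h hA hx, pow_add]
  congr 1
  split <;> simp

end CombiAux

section MatAux
open Matrix

variable (n q : ℕ)

noncomputable def dMat :
    Matrix {U : Finset (Fin n) // U.card = q + 2} {A : Finset (Fin n) // A.card = q + 1} ℂ :=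
  fun U A => if A.1 ⊆ U.1 then (-1 : ℂ) ^ remIdx U.1 A.1 else 0

noncomputable def eMat :
    Matrix {A : Finset (Fin n) // A.card = q + 1} {T : Finset (Fin n) // T.card = q} ℂ :=
  fun A T => if T.1 ⊆ A.1 then (-1 : ℂ) ^ remIdx A.1 T.1 else 0

noncomputable def sMat :
    Matrix {A : Finset (Fin n) // A.card = q + 1} {A : Finset (Fin n) // A.card = q + 1} ℂ :=
  fun A B => if A.1 ≠ B.1 ∧ (A.1 ∪ B.1).card = q + 2
    then (-1 : ℂ) ^ (remIdx (A.1 ∪ B.1) A.1 + remIdx (A.1 ∪ B.1) B.1) else 0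

variable {n q}

lemma ite_lt_sum {x z : Fin n} (hxz : x ≠ z) :
    ((if z < x then (-1:ℂ) else 1) + (if x < z then (-1:ℂ) else 1)) = 0 := by
  rcases lt_or_gt_of_ne hxz with h | h
  · rw [if_neg (asymm h), if_pos h]; ring
  · rw [if_pos h, if_neg (asymm h)]; ring

lemma dtd (hq : q + 2 ≤ n) :
    (dMat n q)ᵀ * dMat n q = sMat n q + (((n:ℂ) - (q+1)) • 1) := by
  ext A B
  rw [Matrix.mul_apply]
  simp only [Matrix.transpose_apply, dMat]
  by_cases hAB : A = B
  · subst hAB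
    have h1 : ∀ U : {U : Finset (Fin n) // U.card = q + 2},
        (if A.1 ⊆ U.1 then (-1 : ℂ) ^ remIdx U.1 A.1 else 0) *
          (if A.1 ⊆ U.1 then (-1 : ℂ) ^ remIdx U.1 A.1 else 0)
        = (if A.1 ⊆ U.1 then (1:ℂ) else 0) := by
      intro U
      split
      · rw [← pow_add]; exact Even.neg_one_pow ⟨_, rfl⟩
      · ring
    rw [Finset.sum_congr rfl (fun U _ => h1 U)]
    have h2 : ∑ U : {U : Finset (Fin n) // U.card = q + 2}, (if A.1 ⊆ U.1 then (1:ℂ) else 0)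
        = ∑ B ∈ Finset.univ.filter (fun B : Finset (Fin n) => B.card = q + 2),
            (if A.1 ⊆ B then (1:ℂ) else 0) := by
      exact (Finset.sum_subtype _ (fun x => by simp) (fun B => if A.1 ⊆ B then (1:ℂ) else 0)).symm
    rw [h2, Finset.sum_boole, Finset.filter_filter]
    have h3 := count_sup A.1 A.2
    rw [h3]
    have hb : sMat n q A A = 0 := by
      rw [sMat, if_neg]; intro h; exact h.1 rfl
    rw [Matrix.add_apply, Matrix.smul_apply, Matrix.one_apply_eq, hb, zero_add, smul_eq_mul,
      mul_one]
    push_cast [Nat.cast_sub (by omega : q + 1 ≤ n)]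
    ring
  · have hne : A.1 ≠ B.1 := fun h => hAB (Subtype.ext h)
    have hstrict : q + 2 ≤ (A.1 ∪ B.1).card := by
      have hsub : A.1 ⊆ A.1 ∪ B.1 := Finset.subset_union_left
      have hne2 : A.1 ≠ A.1 ∪ B.1 := by
        intro h
        have hBsub : B.1 ⊆ A.1 := by rw [h]; exact Finset.subset_union_right
        have : B.1 = A.1 := Finset.eq_of_subset_of_card_le hBsub (by rw [A.2, B.2])
        exact hne this.symm
      have := Finset.card_lt_card (Finset.ssubset_iff_subset_ne.2 ⟨hsub, hne2⟩)
      omega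
    rw [Matrix.add_apply, Matrix.smul_apply, Matrix.one_apply_ne hAB, smul_zero, add_zero]
    by_cases hcard : (A.1 ∪ B.1).card = q + 2
    · rw [Finset.sum_eq_single (⟨A.1 ∪ B.1, hcard⟩ : {U : Finset (Fin n) // U.card = q + 2})]
      · rw [if_pos Finset.subset_union_left, if_pos Finset.subset_union_right,
          sMat, if_pos ⟨hne, hcard⟩, ← pow_add]
      · intro U _ hU
        by_cases h1 : A.1 ⊆ U.1
        · by_cases h2 : B.1 ⊆ U.1
          · exfalso
            apply hU
            apply Subtype.ext
            refine (Finset.eq_of_subset_of_card_le (Finset.union_subset h1 h2) ?_).symm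
            rw [U.2, hcard]
          · rw [if_neg h2, mul_zero]
        · rw [if_neg h1, zero_mul]
      · intro h; exact absurd (Finset.mem_univ _) h
    · have hzero : sMat n q A B = 0 := by rw [sMat, if_neg]; intro h; exact hcard h.2
      rw [hzero]
      apply Finset.sum_eq_zero
      intro U _
      by_cases h1 : A.1 ⊆ U.1
      · by_cases h2 : B.1 ⊆ U.1
        · exfalso
          have := Finset.card_le_card (Finset.union_subset h1 h2)
          rw [U.2] at this
          omega
        · rw [if_neg h2, mul_zero]
      · rw [if_neg h1, zero_mul]

lemma sign_lb {A B : Finset (Fin n)} (hA : A.card = q + 1) (hB : B.card = q + 1)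
    (hne : A ≠ B) (hU : (A ∪ B).card = q + 2) :
    ((-1 : ℂ) ^ (remIdx A (A ∩ B) + remIdx B (A ∩ B)))
      = -(-1 : ℂ) ^ (remIdx (A ∪ B) A + remIdx (A ∪ B) B) := by
  have hI : (A ∩ B).card = q := by
    have := Finset.card_union_add_card_inter A B
    rw [hA, hB, hU] at this; omega
  have hAB1 : (A \ B).card = 1 := by
    have := Finset.card_inter_add_card_sdiff A B
    rw [hA, hI] at this; omega
  have hBA1 : (B \ A).card = 1 := by
    have := Finset.card_inter_add_card_sdiff B A
    rw [hB, Finset.inter_comm, hI] at this; omega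
  obtain ⟨x, hx⟩ := Finset.card_eq_one.1 hAB1
  obtain ⟨z, hz⟩ := Finset.card_eq_one.1 hBA1
  have hxA : x ∈ A ∧ x ∉ B := by
    have : x ∈ A \ B := hx ▸ Finset.mem_singleton_self x
    exact Finset.mem_sdiff.1 this
  have hzB : z ∈ B ∧ z ∉ A := by
    have : z ∈ B \ A := hz ▸ Finset.mem_singleton_self z
    exact Finset.mem_sdiff.1 this
  have hxz : x ≠ z := fun h => hxA.2 (h ▸ hzB.1)
  have hUA : (A ∪ B) \ A = {z} := by rw [Finset.union_sdiff_left, hz]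
  have hUB : (A ∪ B) \ B = {x} := by rw [Finset.union_sdiff_right, hx]
  have hAT : A \ (A ∩ B) = {x} := by rw [Finset.sdiff_inter_self_left, hx]
  have hBT : B \ (A ∩ B) = {z} := by
    rw [Finset.inter_comm, Finset.sdiff_inter_self_left, hz]
  rw [remIdx_single hAT, remIdx_single hBT, remIdx_single hUA, remIdx_single hUB,
    cnt_split hUA Finset.subset_union_left hxA.1,
    cnt_split hUB Finset.subset_union_right hzB.1]
  rcases lt_or_gt_of_ne hxz with h | h
  · rw [if_pos h, if_neg (asymm h)]
    rw [pow_add, pow_add, pow_add, pow_add]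
    ring
  · rw [if_neg (asymm h), if_pos h]
    rw [pow_add, pow_add, pow_add, pow_add]
    ring

lemma ete (hq : q + 2 ≤ n) :
    eMat n q * (eMat n q)ᵀ = ((q + 1 : ℂ) • 1) - sMat n q := by
  ext A B
  rw [Matrix.mul_apply]
  simp only [Matrix.transpose_apply, eMat]
  by_cases hAB : A = B
  · subst hAB
    have h1 : ∀ T : {T : Finset (Fin n) // T.card = q},
        ((if T.1 ⊆ A.1 then (-1 : ℂ) ^ remIdx A.1 T.1 else 0) *
          (if T.1 ⊆ A.1 then (-1 : ℂ) ^ remIdx A.1 T.1 else 0))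
        = (if T.1 ⊆ A.1 then (1:ℂ) else 0) := by
      intro T
      split
      · rw [← pow_add]; exact Even.neg_one_pow ⟨_, rfl⟩
      · ring
    rw [Finset.sum_congr rfl (fun T _ => h1 T)]
    have h2 : ∑ T : {T : Finset (Fin n) // T.card = q}, (if T.1 ⊆ A.1 then (1:ℂ) else 0)
        = ∑ T ∈ Finset.univ.filter (fun T : Finset (Fin n) => T.card = q),
            (if T ⊆ A.1 then (1:ℂ) else 0) :=
      (Finset.sum_subtype _ (fun x => by simp) (fun T => if T ⊆ A.1 then (1:ℂ) else 0)).symm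
    rw [h2, Finset.sum_boole, Finset.filter_filter]
    have h3 : Finset.univ.filter (fun T : Finset (Fin n) => T.card = q ∧ T ⊆ A.1)
        = A.1.powersetCard q := by
      ext T
      simp only [Finset.mem_filter, Finset.mem_univ, true_and, Finset.mem_powersetCard]
      tauto
    rw [h3, Finset.card_powersetCard, A.2]
    have h4 : (q+1).choose q = q + 1 := by
      have h := Nat.choose_symm (Nat.le_succ q)
      have h5 : q + 1 - q = 1 := by omega
      rw [h5, Nat.choose_one_right] at h
      exact h.symm
    rw [h4]
    have hb : sMat n q A A = 0 := by
      rw [sMat, if_neg]; intro h; exact h.1 rfl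
    rw [Matrix.sub_apply, Matrix.smul_apply, Matrix.one_apply_eq, hb, sub_zero, smul_eq_mul,
      mul_one]
    push_cast
    ring
  · have hne : A.1 ≠ B.1 := fun h => hAB (Subtype.ext h)
    rw [Matrix.sub_apply, Matrix.smul_apply, Matrix.one_apply_ne hAB, smul_zero, zero_sub]
    have hcui := Finset.card_union_add_card_inter A.1 B.1
    rw [A.2, B.2] at hcui
    have hstrict : q + 2 ≤ (A.1 ∪ B.1).card := by
      have hsub : A.1 ⊆ A.1 ∪ B.1 := Finset.subset_union_left
      have hne2 : A.1 ≠ A.1 ∪ B.1 := by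
        intro h
        have hBsub : B.1 ⊆ A.1 := by rw [h]; exact Finset.subset_union_right
        have : B.1 = A.1 := Finset.eq_of_subset_of_card_le hBsub (by rw [A.2, B.2])
        exact hne this.symm
      have := Finset.card_lt_card (Finset.ssubset_iff_subset_ne.2 ⟨hsub, hne2⟩)
      rw [A.2] at this
      omega
    by_cases hcard : (A.1 ∪ B.1).card = q + 2
    · have hint : (A.1 ∩ B.1).card = q := by omega
      rw [Finset.sum_eq_single (⟨A.1 ∩ B.1, hint⟩ : {T : Finset (Fin n) // T.card = q})]
      · rw [if_pos Finset.inter_subset_left, if_pos Finset.inter_subset_right,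
          sMat, if_pos ⟨hne, hcard⟩, ← pow_add]
        exact sign_lb A.2 B.2 hne hcard
      · intro T _ hT
        by_cases h1 : T.1 ⊆ A.1
        · by_cases h2 : T.1 ⊆ B.1
          · exfalso
            apply hT
            apply Subtype.ext
            exact Finset.eq_of_subset_of_card_le (Finset.subset_inter h1 h2)
              (by rw [T.2, hint])
          · rw [if_neg h2, mul_zero]
        · rw [if_neg h1, zero_mul]
      · intro h; exact absurd (Finset.mem_univ _) h
    · have hzero : sMat n q A B = 0 := by rw [sMat, if_neg]; intro h; exact hcard h.2
      rw [hzero, neg_zero]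
      apply Finset.sum_eq_zero
      intro T _
      by_cases h1 : T.1 ⊆ A.1
      · by_cases h2 : T.1 ⊆ B.1
        · exfalso
          have := Finset.card_le_card (Finset.subset_inter h1 h2)
          rw [T.2] at this
          omega
        · rw [if_neg h2, mul_zero]
      · rw [if_neg h1, zero_mul]

lemma de_zero : dMat n q * eMat n q = 0 := by
  ext U T
  rw [Matrix.mul_apply, Matrix.zero_apply]
  simp only [dMat, eMat]
  by_cases hTU : T.1 ⊆ U.1
  · have hsd : (U.1 \ T.1).card = 2 := by
      rw [Finset.card_sdiff_of_subset hTU, U.2, T.2]; omega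
    obtain ⟨x, z, hxz, hset⟩ := Finset.card_eq_two.1 hsd
    have hxU : x ∈ U.1 ∧ x ∉ T.1 := by
      have : x ∈ U.1 \ T.1 := by rw [hset]; exact Finset.mem_insert_self x {z}
      exact Finset.mem_sdiff.1 this
    have hzU : z ∈ U.1 ∧ z ∉ T.1 := by
      have : z ∈ U.1 \ T.1 := by
        rw [hset]; exact Finset.mem_insert_of_mem (Finset.mem_singleton_self z)
      exact Finset.mem_sdiff.1 this
    have hc1 : (insert x T.1).card = q + 1 := by
      rw [Finset.card_insert_of_notMem hxU.2, T.2]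
    have hc2 : (insert z T.1).card = q + 1 := by
      rw [Finset.card_insert_of_notMem hzU.2, T.2]
    set A1 : {A : Finset (Fin n) // A.card = q + 1} := ⟨insert x T.1, hc1⟩ with hA1
    set A2 : {A : Finset (Fin n) // A.card = q + 1} := ⟨insert z T.1, hc2⟩ with hA2
    have hA1sub : A1.1 ⊆ U.1 := Finset.insert_subset hxU.1 hTU
    have hA2sub : A2.1 ⊆ U.1 := Finset.insert_subset hzU.1 hTU
    have hA12 : A1 ≠ A2 := by
      intro h
      have : x ∈ insert z T.1 := by
        rw [show insert z T.1 = A2.1 from rfl, ← h]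
        exact Finset.mem_insert_self x T.1
      rcases Finset.mem_insert.1 this with h' | h'
      · exact hxz h'
      · exact hxU.2 h'
    have hUA1 : U.1 \ A1.1 = {z} := by
      ext a
      simp only [Finset.mem_sdiff, hA1, Finset.mem_insert, Finset.mem_singleton, not_or]
      constructor
      · rintro ⟨ha, hax, haT⟩
        have : a ∈ U.1 \ T.1 := Finset.mem_sdiff.2 ⟨ha, haT⟩
        rw [hset] at this
        rcases Finset.mem_insert.1 this with h' | h'
        · exact absurd h' hax
        · exact Finset.mem_singleton.1 h'
      · rintro rfl
        exact ⟨hzU.1, Ne.symm hxz, hzU.2⟩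
    have hUA2 : U.1 \ A2.1 = {x} := by
      ext a
      simp only [Finset.mem_sdiff, hA2, Finset.mem_insert, Finset.mem_singleton, not_or]
      constructor
      · rintro ⟨ha, hax, haT⟩
        have : a ∈ U.1 \ T.1 := Finset.mem_sdiff.2 ⟨ha, haT⟩
        rw [hset] at this
        rcases Finset.mem_insert.1 this with h' | h'
        · exact h'
        · exact absurd (Finset.mem_singleton.1 h') hax
      · rintro rfl
        exact ⟨hxU.1, hxz, hxU.2⟩
    have hA1T : A1.1 \ T.1 = {x} := by
      ext a
      simp only [hA1, Finset.mem_sdiff, Finset.mem_insert, Finset.mem_singleton]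
      constructor
      · rintro ⟨h' | h', haT⟩
        · exact h'
        · exact absurd h' haT
      · rintro rfl
        exact ⟨Or.inl rfl, hxU.2⟩
    have hA2T : A2.1 \ T.1 = {z} := by
      ext a
      simp only [hA2, Finset.mem_sdiff, Finset.mem_insert, Finset.mem_singleton]
      constructor
      · rintro ⟨h' | h', haT⟩
        · exact h'
        · exact absurd h' haT
      · rintro rfl
        exact ⟨Or.inl rfl, hzU.2⟩
    have hout : ∀ A ∈ (Finset.univ : Finset {A : Finset (Fin n) // A.card = q + 1}),
        A ∉ ({A1, A2} : Finset _) →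
        ((if A.1 ⊆ U.1 then (-1:ℂ) ^ remIdx U.1 A.1 else 0) *
          (if T.1 ⊆ A.1 then (-1:ℂ) ^ remIdx A.1 T.1 else 0)) = 0 := by
      intro A _ hA
      by_cases h1 : A.1 ⊆ U.1
      · by_cases h2 : T.1 ⊆ A.1
        · exfalso
          have hATcard : (A.1 \ T.1).card = 1 := by
            rw [Finset.card_sdiff_of_subset h2, A.2, T.2]; omega
          obtain ⟨w, hw⟩ := Finset.card_eq_one.1 hATcard
          have hAeq : A.1 = insert w T.1 := by
            have h5 : T.1 ∪ (A.1 \ T.1) = A.1 := Finset.union_sdiff_of_subset h2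
            rw [hw] at h5
            rw [← h5, Finset.union_comm]
            rfl
          have hwU : w ∈ U.1 \ T.1 := by
            have hwA : w ∈ A.1 \ T.1 := hw ▸ Finset.mem_singleton_self w
            rw [Finset.mem_sdiff] at hwA ⊢
            exact ⟨h1 hwA.1, hwA.2⟩
          rw [hset] at hwU
          apply hA
          rcases Finset.mem_insert.1 hwU with h' | h'
          · subst h'
            exact Finset.mem_insert.2 (Or.inl (Subtype.ext hAeq))
          · rw [Finset.mem_singleton.1 h']  at hAeq
            exact Finset.mem_insert.2 (Or.inr (Finset.mem_singleton.2 (Subtype.ext hAeq)))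
        · rw [if_neg h2, mul_zero]
      · rw [if_neg h1, zero_mul]
    rw [← Finset.sum_subset (Finset.subset_univ ({A1, A2} : Finset _)) hout,
      Finset.sum_pair hA12]
    have hTA1 : T.1 ⊆ A1.1 := Finset.subset_insert _ _
    have hTA2 : T.1 ⊆ A2.1 := Finset.subset_insert _ _
    rw [if_pos hA1sub, if_pos hTA1, if_pos hA2sub, if_pos hTA2,
      remIdx_single hUA1, remIdx_single hA1T, remIdx_single hUA2, remIdx_single hA2T,
      neg_one_pow_cnt hUA1 hA1sub (Finset.mem_insert_self x T.1),
      neg_one_pow_cnt hUA2 hA2sub (Finset.mem_insert_self z T.1)]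
    linear_combination ((-1:ℂ) ^ (A1.1.filter (fun b => b < x)).card *
      (-1:ℂ) ^ (A2.1.filter (fun b => b < z)).card) * ite_lt_sum hxz
  · apply Finset.sum_eq_zero
    intro A _
    by_cases h1 : A.1 ⊆ U.1
    · rw [if_neg (show ¬T.1 ⊆ A.1 from fun h => hTU (h.trans h1)), mul_zero]
    · rw [if_neg h1, zero_mul]

lemma sMat_symm (A B : {A : Finset (Fin n) // A.card = q + 1}) :
    sMat n q A B = sMat n q B A := by
  rw [sMat, sMat]
  by_cases h : A.1 ≠ B.1 ∧ (A.1 ∪ B.1).card = q + 2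
  · have h' : B.1 ≠ A.1 ∧ (B.1 ∪ A.1).card = q + 2 :=
      ⟨h.1.symm, by rw [Finset.union_comm]; exact h.2⟩
    rw [if_pos h, if_pos h', Finset.union_comm A.1 B.1,
      add_comm (remIdx (B.1 ∪ A.1) A.1) (remIdx (B.1 ∪ A.1) B.1)]
  · have h' : ¬(B.1 ≠ A.1 ∧ (B.1 ∪ A.1).card = q + 2) := by
      intro h'
      exact h ⟨h'.1.symm, by rw [Finset.union_comm]; exact h'.2⟩
    rw [if_neg h, if_neg h']

lemma sMat_sq (hq : q + 2 ≤ n) :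
    sMat n q * sMat n q
      = (((q + 1 : ℂ) - ((n : ℂ) - (q + 1))) • sMat n q)
        + (((q + 1 : ℂ) * ((n : ℂ) - (q + 1))) • 1) := by
  have hd := dtd hq
  have he := ete hq
  have hz : dMat n q * eMat n q = 0 := de_zero
  have h1 : sMat n q = (dMat n q)ᵀ * dMat n q - (((n:ℂ) - (q+1)) • 1) := by
    rw [hd]; abel
  have h2 : sMat n q = ((q + 1 : ℂ) • 1) - eMat n q * (eMat n q)ᵀ := by
    rw [he]; abel
  have hXY : ((dMat n q)ᵀ * dMat n q) * (eMat n q * (eMat n q)ᵀ) = 0 := by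
    rw [Matrix.mul_assoc, ← Matrix.mul_assoc (dMat n q), hz, Matrix.zero_mul, Matrix.mul_zero]
  calc sMat n q * sMat n q
      = ((dMat n q)ᵀ * dMat n q - (((n:ℂ) - (q+1)) • 1))
          * (((q + 1 : ℂ) • 1) - eMat n q * (eMat n q)ᵀ) := by rw [← h1, ← h2]
    _ = (q + 1 : ℂ) • ((dMat n q)ᵀ * dMat n q)
          - (dMat n q)ᵀ * dMat n q * (eMat n q * (eMat n q)ᵀ)
          - (((q + 1 : ℂ) * ((n:ℂ) - (q+1))) • (1 : Matrix _ _ ℂ))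
          + ((n:ℂ) - (q+1)) • (eMat n q * (eMat n q)ᵀ) := by
        simp only [Matrix.sub_mul, Matrix.mul_sub, Matrix.smul_mul, Matrix.mul_smul,
          one_mul, mul_one, smul_smul]
        module
    _ = (((q + 1 : ℂ) - ((n : ℂ) - (q + 1))) • sMat n q)
        + (((q + 1 : ℂ) * ((n : ℂ) - (q + 1))) • 1) := by
        rw [hXY, hd, he]
        module

end MatAux

section OrientedAux

open Matrix

variable {n q : ℕ}

lemma bsgn_mul_self (s : Bool) : bsgn s * bsgn s = 1 := by cases s <;> simp [bsgn]

lemma bsgn_not (s : Bool) : bsgn (!s) = -bsgn s := by cases s <;> simp [bsgn]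

noncomputable def cTwo (n q : ℕ) : ℂ := (2 * ((q:ℂ) + 1) * ((n:ℂ) - (q + 1)))⁻¹

lemma fdegX_eq (τ : FullOSimp n q) : fdegX n q τ = n - (q + 1) :=
  count_sup τ.1.1 τ.1.2

lemma fc_mul (hq : q + 2 ≤ n) (τ τ' : FullOSimp n q) :
    fc n q τ * fc n q τ' = cTwo n q := by
  rw [fc, fc, fdegX_eq, fdegX_eq]
  have hcast : ((n - (q + 1) : ℕ) : ℝ) = (n : ℝ) - (q + 1) := by
    rw [Nat.cast_sub (by omega : q + 1 ≤ n)]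
    push_cast
    ring
  rw [hcast]
  have hr : (0:ℝ) ≤ 2 * ((q:ℝ) + 1) * ((n : ℝ) - ((q:ℝ) + 1)) := by
    have h1 : (q:ℝ) + 2 ≤ (n:ℝ) := by exact_mod_cast hq
    nlinarith
  rw [← mul_inv, ← Complex.ofReal_mul, Real.mul_self_sqrt hr, cTwo]
  congr 1
  push_cast
  ring

lemma fsgn_congr {σ σ' : FullOSimp n (q + 1)} (h1 : σ.1.1 = σ'.1.1) (h2 : σ.2 = σ'.2)
    (τ : FullOSimp n q) : fsgn σ τ = fsgn σ' τ := by
  rw [fsgn, fsgn, h1, h2]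

lemma eta_eq (τ τ' : FullOSimp n q) :
    ((fetaUp τ τ' : ℝ) : ℂ)
      = sMat n q τ.1 τ'.1 * ((bsgn τ.2 : ℝ) : ℂ) * ((bsgn τ'.2 : ℝ) : ℂ) := by
  rw [fetaUp, sMat]
  by_cases h : τ.1.1 ≠ τ'.1.1 ∧ (τ.1.1 ∪ τ'.1.1).card = q + 1 + 1
  · rw [dif_pos h, if_pos h]
    rw [fsgn, fsgn]
    simp only [if_pos (Finset.subset_union_left : τ.1.1 ⊆ τ.1.1 ∪ τ'.1.1),
      if_pos (Finset.subset_union_right : τ'.1.1 ⊆ τ.1.1 ∪ τ'.1.1)]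
    show ((((-1:ℝ) ^ _ * bsgn true * bsgn τ.2) * ((-1:ℝ) ^ _ * bsgn true * bsgn τ'.2) : ℝ) : ℂ) = _
    have hb : bsgn true = 1 := rfl
    rw [hb]
    push_cast
    rw [pow_add]
    ring
  · rw [dif_neg h, if_neg h]
    push_cast
    ring

lemma eta_symm (τ τ' : FullOSimp n q) : fetaUp τ τ' = fetaUp τ' τ := by
  apply Complex.ofReal_injective
  rw [eta_eq, eta_eq, sMat_symm]
  ring

lemma disc_eta (hq : q + 2 ≤ n) (τ τ'' : FullOSimp n q) :
    fdiscM n q τ τ'' = cTwo n q * ((fetaUp τ τ'' : ℝ) : ℂ) := by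
  have inner : ∀ p' : FullOSimp n q × FullOSimp n q,
      (fdM n q * fshiftM n q) τ p'
        = (if p'.2 = τ ∧ fetaUp p'.2 p'.1 ≠ 0 then fc n q τ else 0)
            * ((fetaUp p'.2 p'.1 : ℝ) : ℂ) := by
    intro p'
    rw [Matrix.mul_apply]
    rw [Finset.sum_eq_single (p'.2, p'.1)]
    · simp [fdM, fshiftM]
    · intro p _ hp
      have hcond : ¬(p'.1 = p.2 ∧ p'.2 = p.1) := by
        rintro ⟨hc1, hc2⟩
        exact hp (Prod.ext hc2.symm hc1.symm)
      simp only [fshiftM]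
      rw [if_neg hcond, mul_zero]
    · intro h
      exact absurd (Finset.mem_univ _) h
  rw [fdiscM, Matrix.mul_apply]
  rw [Finset.sum_congr rfl (fun p' _ => by rw [inner p'])]
  rw [Finset.sum_eq_single ((τ'', τ) : FullOSimp n q × FullOSimp n q)]
  · by_cases hη : fetaUp τ τ'' = 0
    · have hη2 : fetaUp τ'' τ = 0 := by rw [eta_symm]; exact hη
      simp [fdstarM, hη, hη2]
    · have hη' : fetaUp τ'' τ ≠ 0 := by rw [eta_symm]; exact hη
      simp only [fdstarM]
      rw [if_pos (show True ∧ fetaUp τ τ'' ≠ 0 from ⟨trivial, hη⟩),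
        if_pos (show True ∧ fetaUp τ'' τ ≠ 0 from ⟨trivial, hη'⟩)]
      rw [mul_right_comm, fc_mul hq]
  · intro p _ hp
    by_cases h1 : p.1 = τ''
    · have h2 : ¬(p.2 = τ ∧ fetaUp p.2 p.1 ≠ 0) := fun hc => hp (Prod.ext h1 hc.1)
      rw [if_neg h2, zero_mul, zero_mul]
    · have h3 : ¬(p.1 = τ'' ∧ fetaUp p.1 p.2 ≠ 0) := fun hc => h1 hc.1
      simp only [fdstarM]
      rw [if_neg h3, mul_zero]
  · intro h
    exact absurd (Finset.mem_univ _) h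

lemma disc_entry (hq : q + 2 ≤ n) (τ τ' : FullOSimp n q) :
    fdiscM n q τ τ' = cTwo n q
      * (sMat n q τ.1 τ'.1 * ((bsgn τ.2 : ℝ) : ℂ) * ((bsgn τ'.2 : ℝ) : ℂ)) := by
  rw [disc_eta hq, eta_eq]

noncomputable def piM (n q : ℕ) : Matrix (FullOSimp n q) (FullOSimp n q) ℂ :=
  fun τ τ' => (if τ' = τ then 1 else 0) - (if τ' = fbar τ then 1 else 0)

lemma fbar_fbar (τ : FullOSimp n q) : fbar (fbar τ) = τ := by
  cases τ with
  | mk A s => simp [fbar]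

lemma bool_sign_id (A B : {A : Finset (Fin n) // A.card = q + 1}) (s t : Bool) :
    (if A = B then (1:ℂ) else 0) * ((bsgn s : ℝ) : ℂ) * ((bsgn t : ℝ) : ℂ)
      = (if ((B,t) : FullOSimp n q) = (A,s) then 1 else 0)
        - (if ((B,t) : FullOSimp n q) = fbar (A,s) then 1 else 0) := by
  by_cases hA : A = B
  · subst hA
    cases s <;> cases t <;> norm_num [bsgn, fbar, Prod.ext_iff]
  · have h1 : ((B,t) : FullOSimp n q) ≠ (A,s) := fun h => hA (congrArg Prod.fst h).symm
    have h2 : ((B,t) : FullOSimp n q) ≠ fbar (A,s) := fun h => hA (congrArg Prod.fst h).symm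
    rw [if_neg hA, if_neg h1, if_neg h2]
    ring

lemma bsgn_sq (u : Bool) : ((bsgn u : ℝ) : ℂ) * ((bsgn u : ℝ) : ℂ) = 1 := by
  cases u <;> norm_num [bsgn]

lemma disc_sq (hq : q + 2 ≤ n) :
    fdiscM n q * fdiscM n q
      = (2 * cTwo n q * ((q + 1 : ℂ) - ((n:ℂ) - (q + 1)))) • fdiscM n q
        + cTwo n q • piM n q := by
  have ha : ((q : ℂ) + 1) ≠ 0 := by
    have : (0:ℝ) < (q:ℝ) + 1 := by positivity
    intro h
    have := congrArg Complex.re h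
    simp at this
    norm_cast at this
  have hb : ((n : ℂ) - ((q:ℂ) + 1)) ≠ 0 := by
    have h1 : ((n : ℂ) - ((q:ℂ) + 1)) = ((n - (q+1) : ℕ) : ℂ) := by
      rw [Nat.cast_sub (by omega : q + 1 ≤ n)]
      push_cast
      ring
    rw [h1]
    exact_mod_cast Nat.sub_ne_zero_of_lt (by omega)
  have hkey : 2 * ((q:ℂ) + 1) * ((n:ℂ) - ((q:ℂ) + 1)) * cTwo n q = 1 := by
    rw [cTwo]
    field_simp
  ext τ τ''
  obtain ⟨A, s⟩ := τ
  obtain ⟨B, t⟩ := τ''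
  have hssq : ∑ A' : {A : Finset (Fin n) // A.card = q + 1},
      sMat n q A A' * sMat n q A' B
      = ((q + 1 : ℂ) - ((n : ℂ) - (q + 1))) * sMat n q A B
        + ((q + 1 : ℂ) * ((n : ℂ) - (q + 1))) * (if A = B then 1 else 0) := by
    have h := congrFun (congrFun (sMat_sq hq) A) B
    rw [Matrix.mul_apply] at h
    simpa [Matrix.add_apply, Matrix.smul_apply, Matrix.one_apply, smul_eq_mul] using h
  rw [Matrix.mul_apply]
  have hterm : ∀ τ' : FullOSimp n q,
      fdiscM n q (A,s) τ' * fdiscM n q τ' (B,t)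
        = (cTwo n q * cTwo n q * (((bsgn s : ℝ):ℂ) * ((bsgn t : ℝ):ℂ)))
            * (sMat n q A τ'.1 * sMat n q τ'.1 B) := by
    intro τ'
    rw [disc_entry hq, disc_entry hq]
    have := bsgn_sq τ'.2
    calc cTwo n q * (sMat n q A τ'.1 * ((bsgn s : ℝ):ℂ) * ((bsgn τ'.2 : ℝ):ℂ))
        * (cTwo n q * (sMat n q τ'.1 B * ((bsgn τ'.2 : ℝ):ℂ) * ((bsgn t : ℝ):ℂ)))
        = (cTwo n q * cTwo n q * (((bsgn s : ℝ):ℂ) * ((bsgn t : ℝ):ℂ)))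
            * (sMat n q A τ'.1 * sMat n q τ'.1 B)
            * (((bsgn τ'.2 : ℝ):ℂ) * ((bsgn τ'.2 : ℝ):ℂ)) := by ring
      _ = _ := by rw [this, mul_one]
  rw [Finset.sum_congr rfl (fun τ' _ => hterm τ')]
  rw [Fintype.sum_prod_type]
  have hin : ∀ A' : {A : Finset (Fin n) // A.card = q + 1},
      (∑ s' : Bool, cTwo n q * cTwo n q * (((bsgn s : ℝ):ℂ) * ((bsgn t : ℝ):ℂ))
          * (sMat n q A A' * sMat n q A' B))
        = (2 * (cTwo n q * cTwo n q * (((bsgn s : ℝ):ℂ) * ((bsgn t : ℝ):ℂ))))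
            * (sMat n q A A' * sMat n q A' B) := by
    intro A'
    rw [Fintype.sum_bool]
    ring
  rw [Finset.sum_congr rfl (fun A' _ => hin A'), ← Finset.mul_sum, hssq]
  simp only [Matrix.add_apply, Matrix.smul_apply, smul_eq_mul, piM]
  rw [disc_entry hq, ← bool_sign_id]
  linear_combination (cTwo n q * (if A = B then (1:ℂ) else 0)
    * ((bsgn s : ℝ):ℂ) * ((bsgn t : ℝ):ℂ)) * hkey

lemma bsgn_not' (u : Bool) : ((bsgn (!u) : ℝ) : ℂ) = -((bsgn u : ℝ) : ℂ) := by
  cases u <;> norm_num [bsgn]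

lemma disc_flip_left (hq : q + 2 ≤ n) (τ σ : FullOSimp n q) :
    fdiscM n q (fbar τ) σ = -fdiscM n q τ σ := by
  rw [disc_entry hq, disc_entry hq]
  show cTwo n q * (sMat n q τ.1 σ.1 * ((bsgn (!τ.2) : ℝ):ℂ) * _) = _
  rw [bsgn_not']
  ring

lemma disc_flip_right (hq : q + 2 ≤ n) (τ σ : FullOSimp n q) :
    fdiscM n q τ (fbar σ) = -fdiscM n q τ σ := by
  rw [disc_entry hq, disc_entry hq]
  show cTwo n q * (sMat n q τ.1 σ.1 * _ * ((bsgn (!σ.2) : ℝ):ℂ)) = _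
  rw [bsgn_not']
  ring

lemma disc_mul_pi (hq : q + 2 ≤ n) :
    fdiscM n q * piM n q = (2 : ℂ) • fdiscM n q := by
  ext τ τ'
  rw [Matrix.mul_apply, Matrix.smul_apply]
  have hterm : ∀ σ : FullOSimp n q,
      fdiscM n q τ σ * piM n q σ τ'
        = (if σ = τ' then fdiscM n q τ σ else 0)
          - (if σ = fbar τ' then fdiscM n q τ σ else 0) := by
    intro σ
    rw [piM]
    have h1 : (τ' = σ) ↔ (σ = τ') := eq_comm
    have h2 : (τ' = fbar σ) ↔ (σ = fbar τ') := by
      constructor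
      · intro h
        rw [h, fbar_fbar]
      · intro h
        rw [h, fbar_fbar]
    rw [if_congr h1 rfl rfl, if_congr h2 rfl rfl]
    split <;> split <;> ring
  rw [Finset.sum_congr rfl (fun σ _ => hterm σ), Finset.sum_sub_distrib,
    Finset.sum_ite_eq' Finset.univ τ' (fun σ => fdiscM n q τ σ),
    Finset.sum_ite_eq' Finset.univ (fbar τ') (fun σ => fdiscM n q τ σ)]
  simp only [Finset.mem_univ, if_true]
  rw [disc_flip_right hq, smul_eq_mul]
  ring

lemma disc_cube (hq : q + 2 ≤ n) :
    fdiscM n q * (fdiscM n q * fdiscM n q)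
      = (2 * cTwo n q * ((q + 1 : ℂ) - ((n:ℂ) - (q + 1)))) • (fdiscM n q * fdiscM n q)
        + (2 * cTwo n q) • fdiscM n q := by
  calc fdiscM n q * (fdiscM n q * fdiscM n q)
      = fdiscM n q * ((2 * cTwo n q * ((q + 1 : ℂ) - ((n:ℂ) - (q + 1)))) • fdiscM n q
          + cTwo n q • piM n q) := by rw [disc_sq hq]
    _ = (2 * cTwo n q * ((q + 1 : ℂ) - ((n:ℂ) - (q + 1)))) • (fdiscM n q * fdiscM n q)
          + cTwo n q • (fdiscM n q * piM n q) := by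
        rw [mul_add, Matrix.mul_smul, Matrix.mul_smul]
    _ = _ := by
        rw [disc_mul_pi hq, smul_smul]
        congr 2
        ring

lemma trace_disc (hq : q + 2 ≤ n) : (fdiscM n q).trace = 0 := by
  rw [Matrix.trace]
  apply Finset.sum_eq_zero
  intro τ _
  rw [Matrix.diag_apply, disc_entry hq]
  have h0 : sMat n q τ.1 τ.1 = 0 := if_neg (fun h => h.1 rfl)
  rw [h0]
  ring

lemma trace_pi : (piM n q).trace
    = 2 * (Fintype.card {A : Finset (Fin n) // A.card = q + 1} : ℂ) := by
  rw [Matrix.trace]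
  have hterm : ∀ τ : FullOSimp n q, (piM n q).diag τ = 1 := by
    intro τ
    rw [Matrix.diag_apply, piM]
    have h1 : τ ≠ fbar τ := by
      cases τ with
      | mk A s => 
        intro h
        have := congrArg Prod.snd h
        simp [fbar] at this
    rw [if_pos rfl, if_neg h1]
    ring
  rw [Finset.sum_congr rfl (fun τ _ => hterm τ), Finset.sum_const, Finset.card_univ]
  have : Fintype.card (FullOSimp n q)
      = Fintype.card {A : Finset (Fin n) // A.card = q + 1} * 2 := by
    rw [Fintype.card_prod, Fintype.card_bool]
  rw [this]
  push_cast
  ring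

lemma trace_disc_sq (hq : q + 2 ≤ n) : (fdiscM n q * fdiscM n q).trace
    = cTwo n q * (2 * (Fintype.card {A : Finset (Fin n) // A.card = q + 1} : ℂ)) := by
  rw [disc_sq hq, Matrix.trace_add, Matrix.trace_smul, Matrix.trace_smul, trace_disc hq,
    trace_pi, smul_eq_mul, smul_eq_mul]
  ring

end OrientedAux

section SpecAux

open Matrix

variable {n q : ℕ}

lemma mem_fCSub_iff {f : FullOSimp n q → ℂ} :
    f ∈ fCSub n q ↔ ∀ τ, f (fbar τ) = -f τ := Iff.rfl

lemma pi_mulVec {f : FullOSimp n q → ℂ} (hf : f ∈ fCSub n q) :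
    (piM n q).mulVec f = (2:ℂ) • f := by
  funext τ
  rw [Matrix.mulVec, dotProduct]
  have hterm : ∀ τ' : FullOSimp n q,
      piM n q τ τ' * f τ'
        = (if τ' = τ then f τ' else 0) - (if τ' = fbar τ then f τ' else 0) := by
    intro τ'
    rw [piM]
    split <;> split <;> ring
  rw [Finset.sum_congr rfl (fun τ' _ => hterm τ'), Finset.sum_sub_distrib,
    Finset.sum_ite_eq' Finset.univ τ f, Finset.sum_ite_eq' Finset.univ (fbar τ) f]
  simp only [Finset.mem_univ, if_true, Pi.smul_apply, smul_eq_mul]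
  rw [mem_fCSub_iff.1 hf τ]
  ring

lemma disc_mulVec_mem (hq : q + 2 ≤ n) (g : FullOSimp n q → ℂ) :
    (fdiscM n q).mulVec g ∈ fCSub n q := by
  rw [mem_fCSub_iff]
  intro τ
  rw [Matrix.mulVec, Matrix.mulVec, dotProduct, dotProduct]
  rw [Finset.sum_congr rfl (fun σ _ => by rw [disc_flip_left hq] :
    ∀ σ ∈ Finset.univ, fdiscM n q (fbar τ) σ * g σ = -fdiscM n q τ σ * g σ)]
  rw [← Finset.sum_neg_distrib]
  congr 1
  funext σ
  ring

lemma quad_cochain (hq : q + 2 ≤ n) {f : FullOSimp n q → ℂ} (hf : f ∈ fCSub n q) :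
    (fdiscM n q).mulVec ((fdiscM n q).mulVec f)
      = (2 * cTwo n q * ((q + 1 : ℂ) - ((n:ℂ) - (q + 1)))) • ((fdiscM n q).mulVec f)
        + (2 * cTwo n q) • f := by
  rw [Matrix.mulVec_mulVec, disc_sq hq, Matrix.add_mulVec, Matrix.smul_mulVec,
    Matrix.smul_mulVec, pi_mulVec hf, smul_smul]
  congr 2
  ring

lemma eig_eq (hq : q + 2 ≤ n) {μ : ℂ} (hμ : μ ≠ 0) :
    fEig n q μ = Module.End.eigenspace (Matrix.mulVecLin (fdiscM n q)) μ := by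
  rw [fEig, inf_eq_left]
  intro f hf
  rw [Module.End.mem_eigenspace_iff, Matrix.mulVecLin_apply] at hf
  have h1 : f = μ⁻¹ • (fdiscM n q).mulVec f := by
    rw [hf, smul_smul, inv_mul_cancel₀ hμ, one_smul]
  rw [h1]
  exact Submodule.smul_mem _ _ (disc_mulVec_mem hq f)

noncomputable def projP (n q : ℕ) (μ ν : ℂ) : Matrix (FullOSimp n q) (FullOSimp n q) ℂ :=
  (μ * (μ - ν))⁻¹ • (fdiscM n q * fdiscM n q - ν • fdiscM n q)

variable {μ ν : ℂ}

lemma disc_cube' (hq : q + 2 ≤ n)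
    (hα : 2 * cTwo n q * ((q + 1 : ℂ) - ((n:ℂ) - (q + 1))) = μ + ν)
    (h2c : 2 * cTwo n q = -(μ * ν)) :
    fdiscM n q * (fdiscM n q * fdiscM n q)
      = (μ + ν) • (fdiscM n q * fdiscM n q) + (-(μ * ν)) • fdiscM n q := by
  rw [disc_cube hq, hα, h2c]

lemma disc_mul_projP (hq : q + 2 ≤ n)
    (hα : 2 * cTwo n q * ((q + 1 : ℂ) - ((n:ℂ) - (q + 1))) = μ + ν)
    (h2c : 2 * cTwo n q = -(μ * ν)) :
    fdiscM n q * projP n q μ ν = μ • projP n q μ ν := by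
  have h3 := disc_cube' hq hα h2c
  rw [projP, Matrix.mul_smul,
    mul_sub (fdiscM n q) (fdiscM n q * fdiscM n q) (ν • fdiscM n q),
    Matrix.mul_smul, h3, smul_smul]
  match_scalars <;> ring

lemma projP_fix (hs : μ * (μ - ν) ≠ 0) {f : FullOSimp n q → ℂ}
    (hf : (fdiscM n q).mulVec f = μ • f) :
    (projP n q μ ν).mulVec f = f := by
  rw [projP, Matrix.smul_mulVec, Matrix.sub_mulVec, Matrix.smul_mulVec,
    ← Matrix.mulVec_mulVec, hf, Matrix.mulVec_smul, hf]
  funext τ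
  simp only [Pi.smul_apply, Pi.sub_apply, smul_eq_mul]
  field_simp
  have e : (μ * (μ - ν))⁻¹ * (μ * (μ - ν)) = 1 := inv_mul_cancel₀ hs
  linear_combination (f τ) * e

lemma trace_projP (hq : q + 2 ≤ n) :
    (projP n q μ ν).trace
      = (μ * (μ - ν))⁻¹
          * (cTwo n q * (2 * (Fintype.card {A : Finset (Fin n) // A.card = q + 1} : ℂ))) := by
  rw [projP, Matrix.trace_smul, Matrix.trace_sub, Matrix.trace_smul, trace_disc hq,
    trace_disc_sq hq, smul_zero, sub_zero, smul_eq_mul]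

lemma trace_mulVecLin {ι : Type*} [Fintype ι] [DecidableEq ι] (M : Matrix ι ι ℂ) :
    LinearMap.trace ℂ (ι → ℂ) (Matrix.mulVecLin M) = M.trace := by
  rw [LinearMap.trace_eq_matrix_trace ℂ (Pi.basisFun ℂ ι), LinearMap.toMatrix_eq_toMatrix']
  congr 1
  rw [← Matrix.toLin'_apply' M, LinearMap.toMatrix'_toLin']

lemma finrank_eig_eq (hq : q + 2 ≤ n) (hμ : μ ≠ 0) (hs : μ * (μ - ν) ≠ 0)
    (hα : 2 * cTwo n q * ((q + 1 : ℂ) - ((n:ℂ) - (q + 1))) = μ + ν)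
    (h2c : 2 * cTwo n q = -(μ * ν)) :
    (Module.finrank ℂ (fEig n q μ) : ℂ)
      = (μ * (μ - ν))⁻¹
          * (cTwo n q * (2 * (Fintype.card {A : Finset (Fin n) // A.card = q + 1} : ℂ))) := by
  have hproj : LinearMap.IsProj (fEig n q μ) (Matrix.mulVecLin (projP n q μ ν)) := by
    constructor
    · intro x
      rw [eig_eq hq hμ, Module.End.mem_eigenspace_iff, Matrix.mulVecLin_apply,
        Matrix.mulVecLin_apply, Matrix.mulVec_mulVec, disc_mul_projP hq hα h2c,
        Matrix.smul_mulVec]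
    · intro x hx
      rw [eig_eq hq hμ, Module.End.mem_eigenspace_iff, Matrix.mulVecLin_apply] at hx
      rw [Matrix.mulVecLin_apply]
      exact projP_fix hs hx
  have ht := hproj.trace
  rw [trace_mulVecLin, trace_projP hq] at ht
  rw [← ht]

end SpecAux

section Main

variable {n q : ℕ}

lemma eig_scalar (hq : q + 2 ≤ n) {μ₁ μ₂ μ : ℂ}
    (hα : 2 * cTwo n q * ((q + 1 : ℂ) - ((n:ℂ) - (q + 1))) = μ₁ + μ₂)
    (h2c : 2 * cTwo n q = -(μ₁ * μ₂))
    {f : FullOSimp n q → ℂ} (hf : f ∈ fEig n q μ) :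
    ((μ - μ₁) * (μ - μ₂)) • f = 0 := by
  obtain ⟨heig, hC⟩ := Submodule.mem_inf.1 hf
  rw [Module.End.mem_eigenspace_iff, Matrix.mulVecLin_apply] at heig
  have hq2 := quad_cochain hq hC
  rw [hα, h2c, heig, Matrix.mulVec_smul, heig, smul_smul, smul_smul] at hq2
  rw [show ((μ - μ₁) * (μ - μ₂)) = μ * μ - (((μ₁ + μ₂) * μ) + (-(μ₁ * μ₂))) from by ring,
    sub_smul, add_smul, hq2]
  exact sub_self _

lemma eig_bot (hq : q + 2 ≤ n) {μ₁ μ₂ μ : ℂ}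
    (hα : 2 * cTwo n q * ((q + 1 : ℂ) - ((n:ℂ) - (q + 1))) = μ₁ + μ₂)
    (h2c : 2 * cTwo n q = -(μ₁ * μ₂))
    (h1 : μ ≠ μ₁) (h2 : μ ≠ μ₂) : fEig n q μ = ⊥ := by
  rw [eq_bot_iff]
  intro f hf
  have h := eig_scalar hq hα h2c (μ := μ) hf
  rw [smul_eq_zero] at h
  rcases h with h | h
  · exact absurd (mul_eq_zero.1 h)
      (by push_neg; exact ⟨sub_ne_zero.2 h1, sub_ne_zero.2 h2⟩)
  · simpa using h

end Main


/-- For the full `(n−1)`-dimensional simplex and `0 ≤ q ≤ n−2`, the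
multiset of eigenvalues of the restriction of `D_q^up` to `C^q(K,ℂ)` is symmetric about
the origin if and only if `n` is even and `q = n/2 − 1` (that is, `n = 2(q+1)`). -/
theorem full_simplex_disc_up_spectral_symmetry_iff (n q : ℕ) (hq : q + 2 ≤ n) :
    (∀ μ : ℂ, Module.finrank ℂ ↥(fEig n q μ) = Module.finrank ℂ ↥(fEig n q (-μ)))
      ↔ n = 2 * (q + 1) := by
  have ha : ((q : ℂ) + 1) ≠ 0 := by
    exact_mod_cast Nat.cast_add_one_ne_zero (R := ℂ) q
  have hb : ((n : ℂ) - ((q:ℂ) + 1)) ≠ 0 := by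
    have h1 : ((n : ℂ) - ((q:ℂ) + 1)) = ((n - (q+1) : ℕ) : ℂ) := by
      rw [Nat.cast_sub (by omega : q + 1 ≤ n)]
      push_cast
      ring
    rw [h1]
    exact_mod_cast Nat.sub_ne_zero_of_lt (by omega)
  have hn0 : ((n : ℂ)) ≠ 0 := by
    exact_mod_cast (by omega : n ≠ 0)
  set μ₁ : ℂ := ((n : ℂ) - ((q:ℂ) + 1))⁻¹ with hμ₁def
  set μ₂ : ℂ := -(((q:ℂ) + 1)⁻¹) with hμ₂def
  have hμ1 : μ₁ ≠ 0 := inv_ne_zero hb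
  have hμ2 : μ₂ ≠ 0 := neg_ne_zero.2 (inv_ne_zero ha)
  have hα : 2 * cTwo n q * ((q + 1 : ℂ) - ((n:ℂ) - (q + 1))) = μ₁ + μ₂ := by
    rw [cTwo, hμ₁def, hμ₂def]
    field_simp
    ring
  have h2c : 2 * cTwo n q = -(μ₁ * μ₂) := by
    rw [cTwo, hμ₁def, hμ₂def]
    field_simp
  have hdiff : μ₁ - μ₂ ≠ 0 := by
    have hd : (μ₁ - μ₂) * (((n : ℂ) - ((q:ℂ) + 1)) * ((q:ℂ) + 1)) = (n : ℂ) := by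
      rw [hμ₁def, hμ₂def]
      field_simp
      ring
    intro h0
    rw [h0, zero_mul] at hd
    exact hn0 hd.symm
  have hs1 : μ₁ * (μ₁ - μ₂) ≠ 0 := mul_ne_zero hμ1 hdiff
  have hs2 : μ₂ * (μ₂ - μ₁) ≠ 0 := by
    apply mul_ne_zero hμ2
    intro h
    apply hdiff
    have : μ₁ - μ₂ = -(μ₂ - μ₁) := by ring
    rw [this, h, neg_zero]
  have hNe : Nonempty {A : Finset (Fin n) // A.card = q + 1} := by
    obtain ⟨t, -, ht⟩ := Finset.exists_subset_card_eq
      (by rw [Finset.card_univ, Fintype.card_fin]; omega :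
        q + 1 ≤ (Finset.univ : Finset (Fin n)).card)
    exact ⟨⟨t, ht⟩⟩
  have hN : ((Fintype.card {A : Finset (Fin n) // A.card = q + 1} : ℂ)) ≠ 0 := by
    have h := Fintype.card_pos (α := {A : Finset (Fin n) // A.card = q + 1})
    exact_mod_cast (by omega : Fintype.card {A : Finset (Fin n) // A.card = q + 1} ≠ 0)
  have hcN : cTwo n q ≠ 0 := by
    rw [cTwo]
    exact inv_ne_zero (mul_ne_zero (mul_ne_zero two_ne_zero ha) hb)
  have hα2 : 2 * cTwo n q * ((q + 1 : ℂ) - ((n:ℂ) - (q + 1))) = μ₂ + μ₁ := by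
    rw [hα]; ring
  have h2c2 : 2 * cTwo n q = -(μ₂ * μ₁) := by
    rw [h2c]; ring
  have hm1 := finrank_eig_eq hq hμ1 hs1 hα h2c
  have hm2 := finrank_eig_eq hq hμ2 hs2 hα2 h2c2
  constructor
  · intro H
    have hm2ne : (Module.finrank ℂ (fEig n q μ₂) : ℂ) ≠ 0 := by
      rw [hm2]
      exact mul_ne_zero (inv_ne_zero hs2) (mul_ne_zero hcN (mul_ne_zero two_ne_zero hN))
    have hfr : Module.finrank ℂ (fEig n q (-μ₂)) ≠ 0 := by
      have hH := H (-μ₂)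
      have hnn : fEig n q (-(-μ₂)) = fEig n q μ₂ := by rw [neg_neg]
      rw [hnn] at hH
      intro h0
      rw [h0] at hH
      exact hm2ne (by rw [← hH]; norm_num)
    have hbot : fEig n q (-μ₂) ≠ ⊥ := by
      intro h
      rw [h, finrank_bot] at hfr
      exact hfr rfl
    obtain ⟨f, hfmem, hf0⟩ := (Submodule.ne_bot_iff _).1 hbot
    have hsc := eig_scalar hq hα h2c (μ := -μ₂) hfmem
    rw [smul_eq_zero] at hsc
    rcases hsc with hsc | hsc
    · rcases mul_eq_zero.1 hsc with h | h
      · have hba : ((n:ℂ) - ((q:ℂ)+1))⁻¹ = ((q:ℂ)+1)⁻¹ := by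
          rw [hμ₂def, hμ₁def] at h
          linear_combination -h
        have hab : ((n:ℂ) - ((q:ℂ)+1)) = (q:ℂ)+1 := inv_injective hba
        have hcast : ((n:ℕ) : ℂ) = ((2*(q+1) : ℕ) : ℂ) := by
          push_cast
          linear_combination hab
        exact_mod_cast hcast
      · exfalso
        apply hμ2
        linear_combination (-(1:ℂ)/2) * h
    · exact absurd hsc hf0
  · intro hn μ
    have hab : ((n:ℂ) - ((q:ℂ)+1)) = (q:ℂ)+1 := by
      rw [hn]; push_cast; ring
    have hμ21 : μ₂ = -μ₁ := by
      rw [hμ₁def, hμ₂def, hab]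
    by_cases h0 : μ = 0
    · rw [h0, neg_zero]
    by_cases h1 : μ = μ₁
    · rw [h1, show -μ₁ = μ₂ from hμ21.symm ▸ rfl]
      have hcast : (Module.finrank ℂ (fEig n q μ₁) : ℂ)
          = (Module.finrank ℂ (fEig n q μ₂) : ℂ) := by
        rw [hm1, hm2]
        congr 2
        rw [hμ21]
        ring
      exact_mod_cast hcast
    by_cases h2 : μ = μ₂
    · rw [h2, show -μ₂ = μ₁ from by rw [hμ21, neg_neg]]
      have hcast : (Module.finrank ℂ (fEig n q μ₂) : ℂ)
          = (Module.finrank ℂ (fEig n q μ₁) : ℂ) := by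
        rw [hm1, hm2]
        congr 2
        rw [hμ21]
        ring
      exact_mod_cast hcast
    · have e1 : fEig n q μ = ⊥ := eig_bot hq hα h2c h1 h2
      have e2 : fEig n q (-μ) = ⊥ := by
        apply eig_bot hq hα h2c
        · intro h
          apply h2
          rw [hμ21, ← h, neg_neg]
        · intro h
          apply h1
          rw [← neg_neg μ, h, hμ21, neg_neg]
      rw [e1, e2]
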